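/- Let x be a fractional Brownian motion with Hurst parameter H < 1/2 and let t_k = k/n be the uniform partition of [0,1]. Define, for partition points s ≤ t, h^n_{st} = Σ_{s ≤ t_k < t} ∫_{t_k}^{t_{k+1}} (x_u − x_{t_k}) du. Then there is a constant K independent of n such that E[|h^n_{st}|²] ≤ K n^{−2H−1} (t − s) for all partition points 0 ≤ s ≤ t ≤ 1. -/

import Mathlib

open MeasureTheory ProbabilityTheory Real Filter
open scoped BigOperators NNReal ENNReal Topology

noncomputable section

namespace PV

/-- Covariance function of fractional Brownian motion with Hurst parameter `H`. -/
def fbmCov (H s t : ℝ) : ℝ :=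
  (1 / 2) * (s ^ (2 * H) + t ^ (2 * H) - |t - s| ^ (2 * H))

/-- `X` is a fractional Brownian motion with Hurst parameter `H` on `[0,1]`:
a continuous centered Gaussian process whose finite-dimensional laws are centered
Gaussian with the fBm covariance. -/
structure IsFBM {Ω : Type*} [MeasurableSpace Ω] (P : Measure Ω) (H : ℝ)
    (X : ℝ → Ω → ℝ) : Prop where
  meas : ∀ t : ℝ, Measurable (X t)
  cont : ∀ ω, ContinuousOn (fun t => X t ω) (Set.Icc 0 1)
  gaussian : ∀ (m : ℕ) (ts : Fin m → ℝ) (c : Fin m → ℝ),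
    (∀ i, ts i ∈ Set.Icc (0 : ℝ) 1) →
    P.map (fun ω => ∑ i, c i * X (ts i) ω) =
      gaussianReal 0 (Real.toNNReal (∑ i, ∑ j, c i * c j * fbmCov H (ts i) (ts j)))

/-- `xⁱ_{st} = (x_t - x_s)^i / i!`. -/
def xpow {Ω : Type*} (x : ℝ → Ω → ℝ) (i : ℕ) (s t : ℝ) (ω : Ω) : ℝ :=
  (x t ω - x s ω) ^ i / (Nat.factorial i : ℝ)

/-- Remainder processes of a tuple `y` controlled by `x` with `ℓ` levels. -/
def rem {Ω : Type*} (x : ℝ → Ω → ℝ) (ℓ : ℕ) (y : ℕ → ℝ → Ω → ℝ) (k : ℕ)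
    (s t : ℝ) (ω : Ω) : ℝ :=
  y k t ω - y k s ω - ∑ i ∈ Finset.Icc 1 (ℓ - 1 - k), y (k + i) s ω * xpow x i s t ω

/-- `(y⁽⁰⁾, …, y⁽ℓ⁻¹⁾)` is a rough path controlled by `(x, ℓ, α)` almost surely. -/
structure ControlledAS {Ω : Type*} [MeasurableSpace Ω] (P : Measure Ω)
    (x : ℝ → Ω → ℝ) (ℓ : ℕ) (α : ℝ) (y : ℕ → ℝ → Ω → ℝ) : Prop where
  meas : ∀ k < ℓ, ∀ t : ℝ, Measurable (fun ω => y k t ω)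
  cont : ∀ k < ℓ, ∀ ω, ContinuousOn (fun t => y k t ω) (Set.Icc 0 1)
  init : ∀ k < ℓ, ∀ ω, y k 0 ω = 0
  bound : ∀ ε > (0 : ℝ), ∃ G : Ω → ℝ, ∀ᵐ ω ∂P, ∀ k < ℓ, ∀ s t : ℝ,
    0 ≤ s → s ≤ t → t ≤ 1 →
    |rem x ℓ y k s t ω| ≤ G ω * (t - s) ^ (((ℓ : ℝ) - k) * α - ε)

/-- `(y⁽⁰⁾, …, y⁽ℓ⁻¹⁾)` is a rough path controlled by `(x, ℓ, α)` in `L_p`,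
with control constant `M`. -/
structure ControlledLp {Ω : Type*} [MeasurableSpace Ω] (P : Measure Ω)
    (x : ℝ → Ω → ℝ) (ℓ : ℕ) (α : ℝ) (p : ℝ≥0∞) (y : ℕ → ℝ → Ω → ℝ) (M : ℝ) : Prop where
  meas : ∀ k < ℓ, ∀ t : ℝ, Measurable (fun ω => y k t ω)
  cont : ∀ k < ℓ, ∀ ω, ContinuousOn (fun t => y k t ω) (Set.Icc 0 1)
  init : ∀ k < ℓ, ∀ ω, y k 0 ω = 0
  bound : ∀ k < ℓ, ∀ s t : ℝ, 0 ≤ s → s ≤ t → t ≤ 1 →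
    eLpNorm (fun ω => rem x ℓ y k s t ω) p P ≤
      ENNReal.ofReal (M * (t - s) ^ (((ℓ : ℝ) - k) * α))

/-- Discrete integral `J_s^t(f, h)` of a one-parameter process `f` against `h`,
along the partition `π 0 < π 1 < ⋯ < π n`. -/
def J1 {Ω : Type*} (n : ℕ) (T : ℕ → ℝ) (s t : ℝ) (f : ℝ → Ω → ℝ)
    (h : ℝ → ℝ → Ω → ℝ) (ω : Ω) : ℝ :=
  ∑ k ∈ Finset.range n,
    if s ≤ T k ∧ T k < t then f (T k) ω * h (T k) (T (k + 1)) ω else 0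

/-- Discrete integral `J_s^t(f, h)` of a two-parameter process `f` against `h`. -/
def J2 {Ω : Type*} (n : ℕ) (T : ℕ → ℝ) (s t : ℝ) (f : ℝ → ℝ → Ω → ℝ)
    (h : ℝ → ℝ → Ω → ℝ) (ω : Ω) : ℝ :=
  ∑ k ∈ Finset.range n,
    if s ≤ T k ∧ T k < t then f s (T k) ω * h (T k) (T (k + 1)) ω else 0

/-- The uniform partition `t_k = k / n` of `[0,1]`. -/
def unif (n k : ℕ) : ℝ := (k : ℝ) / n

/-- `c_p = E|N|^p` for a standard normal `N`. -/
def cconst (p : ℝ) : ℝ := 2 ^ (p / 2) * Real.Gamma ((p + 1) / 2) / Real.sqrt π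

/-- Covariance `ρ(k)` of unit increments of fBm. -/
def rho (H : ℝ) (k : ℤ) : ℝ :=
  (1 / 2) * (|(k : ℝ) + 1| ^ (2 * H) - 2 * |(k : ℝ)| ^ (2 * H) + |(k : ℝ) - 1| ^ (2 * H))

/-- The Hermite coefficients `a_{2q}` of `|x|^p - c_p`. -/
def acoef (p : ℝ) (q : ℕ) : ℝ :=
  ∑ r ∈ Finset.range (q + 1),
    ((-1 : ℝ) ^ r / (2 ^ r * (Nat.factorial r : ℝ) * (Nat.factorial (2 * q - 2 * r) : ℝ))) *
      cconst (((2 * q - 2 * r : ℕ) : ℝ) + p)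

/-- `σ² = Σ_{q≥1} (2q)! a_{2q}² Σ_{k∈ℤ} ρ(k)^{2q}`. -/
def sigma2 (H p : ℝ) : ℝ :=
  ∑' q : ℕ, ((Nat.factorial (2 * (q + 1)) : ℝ) * acoef p (q + 1) ^ 2 *
    ∑' k : ℤ, rho H k ^ (2 * (q + 1)))

/-- The sign function. -/
def sgn (x : ℝ) : ℝ := if 0 < x then 1 else if x < 0 then -1 else 0

/-- Hermite coefficient `a_q = (1/q!) ∫ f H_q dγ` with respect to the standard
Gaussian measure. -/
def hermiteCoeff (f : ℝ → ℝ) (q : ℕ) : ℝ :=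
  (Nat.factorial q : ℝ)⁻¹ *
    ∫ v, f v * (Polynomial.aeval v (Polynomial.hermite q)) ∂(gaussianReal 0 1)

/-- `f` has Hermite rank `d`. -/
def HasHermiteRank (f : ℝ → ℝ) (d : ℕ) : Prop :=
  (∀ q < d, hermiteCoeff f q = 0) ∧ hermiteCoeff f d ≠ 0

/-- `h^n_{st} = Σ_{s ≤ t_k < t} ∫_{t_k}^{t_{k+1}} (x_u - x_{t_k}) du` on the uniform
partition. -/
def hnInt {Ω : Type*} (x : ℝ → Ω → ℝ) (n : ℕ) (s t : ℝ) (ω : Ω) : ℝ :=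
  ∑ k ∈ Finset.range n,
    if s ≤ (k : ℝ) / n ∧ (k : ℝ) / n < t then
      ∫ u in ((k : ℝ) / n)..(((k : ℝ) + 1) / n), (x u ω - x ((k : ℝ) / n) ω) else 0

/-- The weighted power-variation sum
`Σ_{0 ≤ t_k < t} y_{t_k} (|n^H (x_{t_{k+1}} - x_{t_k})|^p - c_p)`. -/
def pvarS {Ω : Type*} (x : ℝ → Ω → ℝ) (y : ℕ → ℝ → Ω → ℝ) (H p : ℝ) (n : ℕ)
    (t : ℝ) (ω : Ω) : ℝ :=
  ∑ k ∈ Finset.range n,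
    if (k : ℝ) / n < t then
      y 0 ((k : ℝ) / n) ω *
        (|(n : ℝ) ^ H * (x (((k : ℝ) + 1) / n) ω - x ((k : ℝ) / n) ω)| ^ p - cconst p)
    else 0

end PV

namespace PVAux
open Set


lemma abs_rpow_sub_rpow_le {q : ℝ} (hq : q ≤ 1) {c d : ℝ} (hc : 0 < c) (hcd : c ≤ d) :
    |d ^ q - c ^ q| ≤ |q| * c ^ (q - 1) * (d - c) := by
  have h := norm_image_sub_le_of_norm_deriv_le_segment'
    (f := fun z : ℝ => z ^ q) (f' := fun z : ℝ => q * z ^ (q - 1)) (a := c) (b := d)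
    (C := |q| * c ^ (q - 1)) ?_ ?_ d (right_mem_Icc.2 hcd)
  · rw [Real.norm_eq_abs] at h; linarith [h, mul_assoc (|q|) (c ^ (q-1)) (d - c)]
  · intro z hz
    exact (Real.hasDerivAt_rpow_const
      (Or.inl (ne_of_gt (lt_of_lt_of_le hc hz.1)))).hasDerivWithinAt
  · intro z hz
    have hz0 : 0 < z := lt_of_lt_of_le hc hz.1
    rw [Real.norm_eq_abs, abs_mul, abs_of_pos (Real.rpow_pos_of_pos hz0 _)]
    exact mul_le_mul_of_nonneg_left
      (Real.rpow_le_rpow_of_nonpos hc hz.1 (by linarith)) (abs_nonneg q)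

lemma second_diff_bound {H : ℝ} (hH0 : 0 < H) (hH : H < 1/2) {δ η b₁ b₂ : ℝ}
    (hδ0 : 0 ≤ δ) (hδη : δ ≤ η) (hb₁ : 0 < b₁) (hb : b₁ ≤ b₂) (hb2 : b₂ - b₁ ≤ η) :
    |((b₂ + δ) ^ (2*H) - b₂ ^ (2*H)) - ((b₁ + δ) ^ (2*H) - b₁ ^ (2*H))| ≤
      2 * H * (1 - 2*H) * η ^ 2 * b₁ ^ (2*H - 2) := by
  have hη0 : 0 ≤ η := le_trans hδ0 hδη
  set C : ℝ := 2 * H * (1 - 2*H) * η * b₁ ^ (2*H - 2) with hC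
  have hC0 : 0 ≤ C := by
    have h1 : (0:ℝ) ≤ b₁ ^ (2*H - 2) := Real.rpow_nonneg hb₁.le _
    have h2 : (0:ℝ) < 1 - 2*H := by linarith
    positivity
  have h := norm_image_sub_le_of_norm_deriv_le_segment'
    (f := fun b : ℝ => (b + δ) ^ (2*H) - b ^ (2*H))
    (f' := fun b : ℝ => 1 * (2*H) * (b + δ) ^ (2*H - 1) - (2*H) * b ^ (2*H - 1))
    (a := b₁) (b := b₂) (C := C) ?_ ?_ b₂ (right_mem_Icc.2 hb)
  · rw [Real.norm_eq_abs] at h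
    calc |((b₂ + δ) ^ (2*H) - b₂ ^ (2*H)) - ((b₁ + δ) ^ (2*H) - b₁ ^ (2*H))|
        ≤ C * (b₂ - b₁) := h
      _ ≤ C * η := by exact mul_le_mul_of_nonneg_left hb2 hC0
      _ = 2 * H * (1 - 2*H) * η ^ 2 * b₁ ^ (2*H - 2) := by rw [hC]; ring
  · intro z hz
    have hz0 : 0 < z := lt_of_lt_of_le hb₁ hz.1
    have hzδ : z + δ ≠ 0 := by positivity
    have h1 : HasDerivAt (fun b : ℝ => (b + δ) ^ (2*H)) (1 * (2*H) * (z + δ) ^ (2*H - 1)) z := by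
      exact HasDerivAt.rpow_const ((hasDerivAt_id z).add_const δ) (Or.inl hzδ)
    have h2 : HasDerivAt (fun b : ℝ => b ^ (2*H)) ((2*H) * z ^ (2*H - 1)) z :=
      Real.hasDerivAt_rpow_const (Or.inl (ne_of_gt hz0))
    exact (h1.sub h2).hasDerivWithinAt
  · intro z hz
    have hz0 : 0 < z := lt_of_lt_of_le hb₁ hz.1
    have key : |(z + δ) ^ (2*H - 1) - z ^ (2*H - 1)| ≤
        (1 - 2*H) * z ^ (2*H - 2) * δ := by
      have := abs_rpow_sub_rpow_le (q := 2*H - 1) (by linarith) hz0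
        (by linarith : z ≤ z + δ)
      rw [show (2*H - 1) - 1 = 2*H - 2 by ring] at this
      rw [show |2*H - 1| = 1 - 2*H by rw [abs_of_nonpos (by linarith)]; ring] at this
      simpa using this
    have hz2 : z ^ (2*H - 2) ≤ b₁ ^ (2*H - 2) :=
      Real.rpow_le_rpow_of_nonpos hb₁ hz.1 (by linarith)
    have hzn : (0:ℝ) ≤ z ^ (2*H - 2) := Real.rpow_nonneg hz0.le _
    rw [Real.norm_eq_abs]
    show |1 * (2*H) * (z + δ) ^ (2*H - 1) - (2*H) * z ^ (2*H - 1)| ≤ C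
    have e : 1 * (2*H) * (z + δ) ^ (2*H - 1) - (2*H) * z ^ (2*H - 1)
        = (2*H) * ((z + δ) ^ (2*H - 1) - z ^ (2*H - 1)) := by ring
    rw [e, abs_mul, abs_of_pos (by linarith : (0:ℝ) < 2*H)]
    calc (2*H) * |(z + δ) ^ (2*H - 1) - z ^ (2*H - 1)|
        ≤ (2*H) * ((1 - 2*H) * z ^ (2*H - 2) * δ) :=
          mul_le_mul_of_nonneg_left key (by linarith)
      _ ≤ (2*H) * ((1 - 2*H) * b₁ ^ (2*H - 2) * η) := by
          apply mul_le_mul_of_nonneg_left _ (by linarith)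
          exact mul_le_mul (mul_le_mul_of_nonneg_left hz2 (by linarith)) hδη hδ0
            (mul_nonneg (by linarith) (Real.rpow_nonneg hb₁.le _))
      _ = C := by rw [hC]; ring



lemma rpow_two_eq (x : ℝ) : x ^ (2:ℝ) = x ^ 2 := by
  rw [show (2:ℝ) = ((2:ℕ):ℝ) by norm_num, Real.rpow_natCast]

lemma integral_sq_exp_neg_mul_sq {b : ℝ} (hb : 0 < b) :
    ∫ x : ℝ, x ^ 2 * rexp (-b * x ^ 2) = b ^ (-(3:ℝ)/2) * (Real.sqrt π / 2) := by
  have h1 : (∫ x : ℝ, x ^ 2 * rexp (-b * x ^ 2))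
      = 2 * ∫ x in Ioi (0:ℝ), x ^ 2 * rexp (-b * x ^ 2) := by
    have := integral_comp_abs (f := fun t : ℝ => t ^ 2 * rexp (-b * t ^ 2))
    simpa [sq_abs] using this
  rw [h1]
  have h2 : (∫ x in Ioi (0:ℝ), x ^ 2 * rexp (-b * x ^ 2))
      = ∫ x in Ioi (0:ℝ), x ^ (2:ℝ) * rexp (-b * x ^ (2:ℝ)) := by
    refine setIntegral_congr_fun measurableSet_Ioi (fun x _ => ?_)
    rw [rpow_two_eq]
  rw [h2, integral_rpow_mul_exp_neg_mul_rpow two_pos (by norm_num) hb]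
  have h3 : ((2:ℝ) + 1) / 2 = 1/2 + 1 := by norm_num
  rw [h3, Real.Gamma_add_one (by norm_num), Real.Gamma_one_half_eq]
  rw [show (-((2:ℝ)+1)/2) = -(3:ℝ)/2 by norm_num]
  ring

lemma integrable_sq_gaussianReal (v : ℝ≥0) :
    Integrable (fun y : ℝ => y ^ 2) (gaussianReal 0 v) := by
  rcases eq_or_ne v 0 with hv | hv
  · rw [hv, gaussianReal_zero_var]
    exact (integrable_const ((0:ℝ) ^ 2)).congr (ae_eq_dirac (fun y : ℝ => y ^ 2)).symm
  · rw [gaussianReal_of_var_ne_zero _ hv]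
    rw [gaussianPDF_def]
    rw [integrable_withDensity_iff (measurable_gaussianPDFReal 0 v).ennreal_ofReal
      (Eventually.of_forall fun x => ENNReal.ofReal_lt_top)]
    have hv0 : (0:ℝ) < v := by positivity
    set b : ℝ := (2 * (v:ℝ))⁻¹ with hbdef
    have hb : 0 < b := by positivity
    have heq : (fun x : ℝ => x ^ 2 * (ENNReal.ofReal (gaussianPDFReal 0 v x)).toReal)
        = fun x : ℝ => (Real.sqrt (2 * π * v))⁻¹ * (x ^ (2:ℝ) * rexp (-b * x ^ 2)) := by
      funext x
      rw [ENNReal.toReal_ofReal (gaussianPDFReal_nonneg 0 v x), gaussianPDFReal, rpow_two_eq]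
      have : -(x - 0) ^ 2 / (2 * (v:ℝ)) = -b * x ^ 2 := by
        rw [sub_zero, hbdef]; field_simp
      rw [this]; ring
    rw [heq]
    exact ((integrable_rpow_mul_exp_neg_mul_sq hb (by norm_num)).const_mul _)

lemma integral_sq_gaussianReal (v : ℝ≥0) :
    ∫ y : ℝ, y ^ 2 ∂(gaussianReal 0 v) = v := by
  rcases eq_or_ne v 0 with hv | hv
  · rw [hv, gaussianReal_zero_var]
    simp
  · rw [gaussianReal_of_var_ne_zero _ hv, gaussianPDF_def]
    have hv0 : (0:ℝ) < v := by positivity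
    set b : ℝ := (2 * (v:ℝ))⁻¹ with hbdef
    have hb : 0 < b := by positivity
    have hmeas : Measurable fun x : ℝ => (gaussianPDFReal 0 v x).toNNReal :=
      (measurable_gaussianPDFReal 0 v).real_toNNReal
    have hofReal : (fun x : ℝ => ENNReal.ofReal (gaussianPDFReal 0 v x))
        = fun x : ℝ => ((gaussianPDFReal 0 v x).toNNReal : ℝ≥0∞) := rfl
    rw [hofReal, integral_withDensity_eq_integral_smul hmeas]
    have heq : (fun x : ℝ => (gaussianPDFReal 0 v x).toNNReal • x ^ 2)
        = fun x : ℝ => (Real.sqrt (2 * π * v))⁻¹ * (x ^ 2 * rexp (-b * x ^ 2)) := by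
      funext x
      rw [NNReal.smul_def, smul_eq_mul,
        Real.coe_toNNReal _ (gaussianPDFReal_nonneg 0 v x), gaussianPDFReal]
      have : -(x - 0) ^ 2 / (2 * (v:ℝ)) = -b * x ^ 2 := by
        rw [sub_zero, hbdef]; field_simp
      rw [this]; ring
    rw [heq, integral_const_mul, integral_sq_exp_neg_mul_sq hb]
    -- arithmetic: (√(2πv))⁻¹ * (b^{-3/2} * (√π / 2)) = v
    have h2v : (0:ℝ) < 2 * (v:ℝ) := by positivity
    have hbpow : b ^ (-(3:ℝ)/2) = (2 * (v:ℝ)) * Real.sqrt (2 * (v:ℝ)) := by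
      rw [hbdef, show (-(3:ℝ)/2) = -((3:ℝ)/2) by norm_num,
        Real.rpow_neg (by positivity), Real.inv_rpow h2v.le, inv_inv,
        show ((3:ℝ)/2) = 1 + (1:ℝ)/2 by norm_num, Real.rpow_add h2v,
        Real.rpow_one, ← Real.sqrt_eq_rpow]
    have hs : Real.sqrt (2*(v:ℝ)) ≠ 0 := ne_of_gt (Real.sqrt_pos.2 h2v)
    have hp : Real.sqrt π ≠ 0 := ne_of_gt (Real.sqrt_pos.2 pi_pos)
    have h2piv : Real.sqrt (2*π*(v:ℝ)) = Real.sqrt π * Real.sqrt (2*(v:ℝ)) := by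
      rw [show 2*π*(v:ℝ) = π * (2*(v:ℝ)) by ring, Real.sqrt_mul pi_pos.le]
    rw [hbpow, h2piv]
    have hss : Real.sqrt (2*(v:ℝ)) * Real.sqrt (2*(v:ℝ)) = 2*(v:ℝ) :=
      Real.mul_self_sqrt h2v.le
    field_simp

section FBMFacts

open Set PV

variable {Ω : Type*} [MeasurableSpace Ω] {P : Measure Ω} [IsProbabilityMeasure P]
  {H : ℝ} {x : ℝ → Ω → ℝ}

lemma fbmCov_self (hH0 : 0 < H) (t : ℝ) : fbmCov H t t = t ^ (2*H) := by
  rw [fbmCov, sub_self, abs_zero, Real.zero_rpow (by positivity)]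
  ring

lemma memℒp2_integrable_mul {f g : Ω → ℝ} (hf : MemLp f 2 P) (hg : MemLp g 2 P) :
    Integrable (fun ω => f ω * g ω) P := by
  have hbd : Integrable (fun ω => ((f ω) ^ 2 + (g ω) ^ 2) / 2) P :=
    (hf.integrable_sq.add hg.integrable_sq).div_const 2
  refine Integrable.mono' hbd
    (hf.aestronglyMeasurable.mul hg.aestronglyMeasurable)
    (Eventually.of_forall fun ω => ?_)
  rw [Real.norm_eq_abs, abs_mul]
  nlinarith [sq_nonneg (|f ω| - |g ω|), sq_abs (f ω), sq_abs (g ω), abs_nonneg (f ω),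
    abs_nonneg (g ω)]

lemma map_single (hx : IsFBM P H x) (hH0 : 0 < H) {t : ℝ} (ht : t ∈ Icc (0:ℝ) 1) :
    P.map (x t) = gaussianReal 0 (t ^ (2*H)).toNNReal := by
  have h := hx.gaussian 1 (fun _ => t) (fun _ => 1) (fun _ => ht)
  have h1 : (fun ω => ∑ i : Fin 1, (fun _ : Fin 1 => (1:ℝ)) i * x ((fun _ : Fin 1 => t) i) ω)
      = x t := by funext ω; simp
  have h2 : (∑ i : Fin 1, ∑ j : Fin 1, (fun _ : Fin 1 => (1:ℝ)) i * (fun _ : Fin 1 => (1:ℝ)) j *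
      fbmCov H ((fun _ : Fin 1 => t) i) ((fun _ : Fin 1 => t) j)) = t ^ (2*H) := by
    simp [fbmCov_self hH0]
  rw [h1, h2] at h
  exact h

lemma memL2 (hx : IsFBM P H x) (hH0 : 0 < H) {t : ℝ} (ht : t ∈ Icc (0:ℝ) 1) :
    MemLp (x t) 2 P := by
  have hmap := map_single hx hH0 ht
  have h : MemLp (id : ℝ → ℝ) 2 (P.map (x t)) := by
    rw [hmap]
    exact (memLp_two_iff_integrable_sq aestronglyMeasurable_id).2
      (integrable_sq_gaussianReal _)
  rw [memLp_map_measure_iff aestronglyMeasurable_id (hx.meas t).aemeasurable] at h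
  exact h

lemma int_sq (hx : IsFBM P H x) (hH0 : 0 < H) {t : ℝ} (ht : t ∈ Icc (0:ℝ) 1) :
    ∫ ω, (x t ω) ^ 2 ∂P = t ^ (2*H) := by
  have h : ∫ y, y ^ 2 ∂(P.map (x t)) = ∫ ω, (x t ω) ^ 2 ∂P :=
    integral_map (hx.meas t).aemeasurable
      ((measurable_id.pow_const 2).aestronglyMeasurable)
  rw [map_single hx hH0 ht, integral_sq_gaussianReal] at h
  rw [← h, Real.coe_toNNReal _ (Real.rpow_nonneg ht.1 _)]

lemma int_mul (hx : IsFBM P H x) (hH0 : 0 < H) {s t : ℝ} (hs : s ∈ Icc (0:ℝ) 1)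
    (ht : t ∈ Icc (0:ℝ) 1) :
    ∫ ω, x s ω * x t ω ∂P = fbmCov H s t := by
  have hmap := hx.gaussian 2 ![s, t] ![1, 1] (by intro i; fin_cases i <;> assumption)
  have h1 : (fun ω => ∑ i : Fin 2, ![(1:ℝ), 1] i * x (![s, t] i) ω)
      = fun ω => x s ω + x t ω := by
    funext ω; simp [Fin.sum_univ_two]
  have hS : (∑ i : Fin 2, ∑ j : Fin 2, ![(1:ℝ), 1] i * ![(1:ℝ), 1] j *
      fbmCov H (![s, t] i) (![s, t] j))
      = 2 * s ^ (2*H) + 2 * t ^ (2*H) - |t - s| ^ (2*H) := by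
    simp only [Fin.sum_univ_two, Matrix.cons_val_zero, Matrix.cons_val_one, Matrix.head_cons,
      one_mul]
    rw [fbmCov_self hH0, fbmCov_self hH0, fbmCov, fbmCov, abs_sub_comm s t]
    ring
  have hS0 : 0 ≤ 2 * s ^ (2*H) + 2 * t ^ (2*H) - |t - s| ^ (2*H) := by
    have h2H : (0:ℝ) ≤ 2*H := by linarith
    have hsn : (0:ℝ) ≤ s ^ (2*H) := Real.rpow_nonneg hs.1 _
    have htn : (0:ℝ) ≤ t ^ (2*H) := Real.rpow_nonneg ht.1 _
    rcases le_total s t with h | h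
    · have : |t - s| ^ (2*H) ≤ t ^ (2*H) := by
        rw [abs_of_nonneg (sub_nonneg.2 h)]
        exact Real.rpow_le_rpow (by linarith) (by linarith [hs.1]) h2H
      linarith
    · have : |t - s| ^ (2*H) ≤ s ^ (2*H) := by
        rw [abs_of_nonpos (sub_nonpos.2 h), neg_sub]
        exact Real.rpow_le_rpow (by linarith) (by linarith [ht.1]) h2H
      linarith
  rw [h1, hS] at hmap
  have hsum : ∫ ω, (x s ω + x t ω) ^ 2 ∂P
      = 2 * s ^ (2*H) + 2 * t ^ (2*H) - |t - s| ^ (2*H) := by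
    have h := integral_map (μ := P) (f := fun y : ℝ => y ^ 2)
      (φ := fun ω => x s ω + x t ω) (((hx.meas s).add (hx.meas t)).aemeasurable)
      ((measurable_id.pow_const 2).aestronglyMeasurable)
    rw [hmap, integral_sq_gaussianReal] at h
    rw [← h, Real.coe_toNNReal _ hS0]
  have hs2 := memL2 hx hH0 hs
  have ht2 := memL2 hx hH0 ht
  have i1 : Integrable (fun ω => (x s ω) ^ 2) P := hs2.integrable_sq
  have i3 : Integrable (fun ω => (x t ω) ^ 2) P := ht2.integrable_sq
  have i2 : Integrable (fun ω => x s ω * x t ω) P := memℒp2_integrable_mul hs2 ht2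
  have e : (fun ω => (x s ω + x t ω) ^ 2)
      = fun ω => ((x s ω) ^ 2 + 2 * (x s ω * x t ω)) + (x t ω) ^ 2 := by
    funext ω; ring
  have i2' : Integrable (fun ω => 2 * (x s ω * x t ω)) P := i2.const_mul 2
  have i12 : Integrable (fun ω => x s ω ^ 2 + 2 * (x s ω * x t ω)) P := i1.add i2'
  rw [e, integral_add i12 i3, integral_add i1 i2', integral_const_mul] at hsum
  rw [int_sq hx hH0 hs, int_sq hx hH0 ht] at hsum
  rw [fbmCov]
  linarith

lemma inc_cov (hx : IsFBM P H x) (hH0 : 0 < H) {a b u v : ℝ} (ha : a ∈ Icc (0:ℝ) 1)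
    (hb : b ∈ Icc (0:ℝ) 1) (hu : u ∈ Icc (0:ℝ) 1) (hv : v ∈ Icc (0:ℝ) 1) :
    Integrable (fun ω => (x u ω - x a ω) * (x v ω - x b ω)) P ∧
    ∫ ω, (x u ω - x a ω) * (x v ω - x b ω) ∂P
      = fbmCov H u v - fbmCov H u b - fbmCov H a v + fbmCov H a b := by
  have iuv := memℒp2_integrable_mul (memL2 hx hH0 hu) (memL2 hx hH0 hv)
  have iub := memℒp2_integrable_mul (memL2 hx hH0 hu) (memL2 hx hH0 hb)
  have iav := memℒp2_integrable_mul (memL2 hx hH0 ha) (memL2 hx hH0 hv)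
  have iab := memℒp2_integrable_mul (memL2 hx hH0 ha) (memL2 hx hH0 hb)
  refine ⟨memℒp2_integrable_mul ((memL2 hx hH0 hu).sub (memL2 hx hH0 ha))
    ((memL2 hx hH0 hv).sub (memL2 hx hH0 hb)), ?_⟩
  have e : (fun ω => (x u ω - x a ω) * (x v ω - x b ω))
      = fun ω => (x u ω * x v ω - x u ω * x b ω - x a ω * x v ω) + x a ω * x b ω := by
    funext ω; ring
  have i4 : Integrable (fun ω => x u ω * x v ω - x u ω * x b ω) P := iuv.sub iub
  have i5 : Integrable (fun ω => x u ω * x v ω - x u ω * x b ω - x a ω * x v ω) P := i4.sub iav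
  rw [e, integral_add i5 iab, integral_sub i4 iav,
    integral_sub iuv iub, int_mul hx hH0 hu hv, int_mul hx hH0 hu hb,
    int_mul hx hH0 ha hv, int_mul hx hH0 ha hb]

lemma inc_var (hx : IsFBM P H x) (hH0 : 0 < H) {a u : ℝ} (ha0 : 0 ≤ a) (hau : a ≤ u)
    (hu1 : u ≤ 1) :
    ∫ ω, (x u ω - x a ω) ^ 2 ∂P = (u - a) ^ (2*H) := by
  have ha : a ∈ Icc (0:ℝ) 1 := ⟨ha0, le_trans hau hu1⟩
  have hu : u ∈ Icc (0:ℝ) 1 := ⟨le_trans ha0 hau, hu1⟩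
  have h := (inc_cov hx hH0 ha ha hu hu).2
  have e : (fun ω => (x u ω - x a ω) * (x u ω - x a ω)) = fun ω => (x u ω - x a ω) ^ 2 := by
    funext ω; ring
  rw [e] at h
  rw [h, fbmCov_self hH0, fbmCov_self hH0, fbmCov, fbmCov, abs_of_nonneg (sub_nonneg.2 hau),
    abs_sub_comm a u, abs_of_nonneg (sub_nonneg.2 hau)]
  ring

end FBMFacts


section Fubini

open Set PV

variable {Ω : Type*} [MeasurableSpace Ω] {P : Measure Ω} [IsProbabilityMeasure P]
  {H : ℝ} {x : ℝ → Ω → ℝ}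

/-- Clamp to `[0,1]`. -/
def clamp (u : ℝ) : ℝ := min 1 (max 0 u)

lemma clamp_mem (u : ℝ) : clamp u ∈ Icc (0:ℝ) 1 :=
  ⟨le_min zero_le_one (le_max_left _ _), min_le_left _ _⟩

lemma clamp_of_mem {u : ℝ} (hu : u ∈ Icc (0:ℝ) 1) : clamp u = u := by
  rw [clamp, max_eq_right hu.1, min_eq_right hu.2]

lemma continuous_clamp : Continuous clamp :=
  continuous_const.min (continuous_const.max continuous_id)

lemma meas_uncurry (hx : IsFBM P H x) :
    Measurable (Function.uncurry fun u ω => x (clamp u) ω) :=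
  measurable_uncurry_of_continuous_of_measurable
    (fun ω => (hx.cont ω).comp_continuous continuous_clamp clamp_mem)
    (fun u => hx.meas _)

lemma lint_sq_eq (hx : IsFBM P H x) (hH0 : 0 < H) {u a : ℝ} (ha : a ∈ Icc (0:ℝ) 1)
    (hu : u ∈ Icc (0:ℝ) 1) :
    ∫⁻ ω, ((‖x u ω - x a ω‖₊ : ℝ≥0∞)) ^ 2 ∂P
      = ENNReal.ofReal (∫ ω, (x u ω - x a ω) ^ 2 ∂P) := by
  have hint : Integrable (fun ω => (x u ω - x a ω) ^ 2) P :=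
    ((memL2 hx hH0 hu).sub (memL2 hx hH0 ha)).integrable_sq
  rw [ofReal_integral_eq_lintegral_ofReal hint (Eventually.of_forall fun ω => sq_nonneg _)]
  congr 1
  funext ω
  rw [← enorm_eq_nnnorm, ← ofReal_norm, ← ENNReal.ofReal_pow (norm_nonneg _), Real.norm_eq_abs,
    sq_abs]

lemma cov_integral (hx : IsFBM P H x) (hH0 : 0 < H) {n k l : ℕ}
    (hk : k < n) (hl : l < n) {B : ℝ} (hB0 : 0 ≤ B)
    (hB : ∀ u v : ℝ, u ∈ Ioc ((k:ℝ)/n) (((k:ℝ)+1)/n) → v ∈ Ioc ((l:ℝ)/n) (((l:ℝ)+1)/n) →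
      |∫ ω, (x u ω - x ((k:ℝ)/n) ω) * (x v ω - x ((l:ℝ)/n) ω) ∂P| ≤ B) :
    Integrable (fun ω => (∫ u in ((k:ℝ)/n)..(((k:ℝ)+1)/n), (x u ω - x ((k:ℝ)/n) ω)) *
        (∫ v in ((l:ℝ)/n)..(((l:ℝ)+1)/n), (x v ω - x ((l:ℝ)/n) ω))) P ∧
    |∫ ω, (∫ u in ((k:ℝ)/n)..(((k:ℝ)+1)/n), (x u ω - x ((k:ℝ)/n) ω)) *
        (∫ v in ((l:ℝ)/n)..(((l:ℝ)+1)/n), (x v ω - x ((l:ℝ)/n) ω)) ∂P|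
      ≤ B * ((1/(n:ℝ)) * (1/(n:ℝ))) := by
  have hn : 1 ≤ n := Nat.one_le_iff_ne_zero.2 (by rintro rfl; exact Nat.not_lt_zero k hk)
  have hN : (0:ℝ) < n := by exact_mod_cast hn
  set tk : ℝ := (k:ℝ)/n with htkdef
  set tk1 : ℝ := ((k:ℝ)+1)/n with htk1def
  set tl : ℝ := (l:ℝ)/n with htldef
  set tl1 : ℝ := ((l:ℝ)+1)/n with htl1def
  have hIcc : ∀ {m : ℕ}, m < n → Icc ((m:ℝ)/n) (((m:ℝ)+1)/n) ⊆ Icc (0:ℝ) 1 := by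
    intro m hm
    apply Icc_subset_Icc
    · positivity
    · rw [div_le_one hN]
      have : (m:ℝ) + 1 ≤ n := by exact_mod_cast hm
      exact this
  have htk01 : tk ∈ Icc (0:ℝ) 1 := hIcc hk ⟨le_rfl, by rw [div_le_div_iff_of_pos_right hN]; linarith⟩
  have htl01 : tl ∈ Icc (0:ℝ) 1 := hIcc hl ⟨le_rfl, by rw [div_le_div_iff_of_pos_right hN]; linarith⟩
  have htkk : tk ≤ tk1 := by rw [div_le_div_iff_of_pos_right hN]; linarith
  have htll : tl ≤ tl1 := by rw [div_le_div_iff_of_pos_right hN]; linarith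
  set I : Set ℝ := Ioc tk tk1 with hIdef
  set J : Set ℝ := Ioc tl tl1 with hJdef
  set μI : Measure ℝ := volume.restrict I with hμIdef
  set μJ : Measure ℝ := volume.restrict J with hμJdef
  set μz : Measure (ℝ × ℝ) := μI.prod μJ with hμzdef
  haveI : IsFiniteMeasure μI := by
    constructor; rw [hμIdef, Measure.restrict_apply_univ]; exact measure_Ioc_lt_top
  haveI : IsFiniteMeasure μJ := by
    constructor; rw [hμJdef, Measure.restrict_apply_univ]; exact measure_Ioc_lt_top
  set y : ℝ → Ω → ℝ := fun u ω => x (clamp u) ω with hydef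
  have hyeq : ∀ {u : ℝ}, u ∈ Icc (0:ℝ) 1 → y u = x u := by
    intro u hu; rw [hydef]; simp only; rw [clamp_of_mem hu]
  set F : (ℝ × ℝ) × Ω → ℝ :=
    fun q => (y q.1.1 q.2 - y tk q.2) * (y q.1.2 q.2 - y tl q.2) with hFdef
  have hym := meas_uncurry hx
  have hm1 : Measurable fun q : (ℝ × ℝ) × Ω => y q.1.1 q.2 :=
    hym.comp (measurable_fst.fst.prodMk measurable_snd)
  have hm2 : Measurable fun q : (ℝ × ℝ) × Ω => y tk q.2 :=
    hym.comp (measurable_const.prodMk measurable_snd)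
  have hm3 : Measurable fun q : (ℝ × ℝ) × Ω => y q.1.2 q.2 :=
    hym.comp (measurable_fst.snd.prodMk measurable_snd)
  have hm4 : Measurable fun q : (ℝ × ℝ) × Ω => y tl q.2 :=
    hym.comp (measurable_const.prodMk measurable_snd)
  have hFm : Measurable F := ((hm1.sub hm2).mul (hm3.sub hm4))
  -- a.e. membership
  have haez : ∀ᵐ z ∂μz, z ∈ I ×ˢ J := by
    rw [hμzdef, hμIdef, hμJdef, Measure.prod_restrict]
    exact ae_restrict_mem (measurableSet_Ioc.prod measurableSet_Ioc)
  -- measure of the box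
  have hμzuniv : μz univ = ENNReal.ofReal (1/(n:ℝ)) * ENNReal.ofReal (1/(n:ℝ)) := by
    have h1n : tk1 - tk = 1/(n:ℝ) := by
      rw [htk1def, htkdef, div_sub_div_same]; norm_num
    have h2n : tl1 - tl = 1/(n:ℝ) := by
      rw [htl1def, htldef, div_sub_div_same]; norm_num
    rw [hμzdef, ← Set.univ_prod_univ, Measure.prod_prod, hμIdef, hμJdef,
      Measure.restrict_apply_univ, Measure.restrict_apply_univ, hIdef, hJdef,
      Real.volume_Ioc, Real.volume_Ioc, h1n, h2n]
  -- moment bound for in-range u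
  have hmom : ∀ {m : ℕ} (hm : m < n) {u : ℝ}, u ∈ Ioc ((m:ℝ)/n) (((m:ℝ)+1)/n) →
      ∫⁻ ω, ((‖x u ω - x ((m:ℝ)/n) ω‖₊ : ℝ≥0∞)) ^ 2 ∂P ≤ 1 := by
    intro m hm u hu
    have hu01 : u ∈ Icc (0:ℝ) 1 := hIcc hm ⟨le_of_lt hu.1, hu.2⟩
    have hm01 : (m:ℝ)/n ∈ Icc (0:ℝ) 1 := hIcc hm ⟨le_rfl, by
      rw [div_le_div_iff_of_pos_right hN]; linarith⟩
    rw [lint_sq_eq hx hH0 hm01 hu01,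
      inc_var hx hH0 hm01.1 (le_of_lt hu.1) hu01.2]
    rw [show (1:ℝ≥0∞) = ENNReal.ofReal 1 by simp]
    apply ENNReal.ofReal_le_ofReal
    apply Real.rpow_le_one (by linarith [hu.1.le]) _ (by linarith)
    have : (m:ℝ)/n ≥ 0 := hm01.1
    linarith [hu01.2]
  -- integrability of F on the product
  have hg1m : Measurable fun q : (ℝ × ℝ) × Ω => ((‖y q.1.1 q.2 - y tk q.2‖₊ : ℝ≥0∞)) ^ 2 :=
    ((hm1.sub hm2).nnnorm.coe_nnreal_ennreal).pow_const 2
  have hg2m : Measurable fun q : (ℝ × ℝ) × Ω => ((‖y q.1.2 q.2 - y tl q.2‖₊ : ℝ≥0∞)) ^ 2 :=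
    ((hm3.sub hm4).nnnorm.coe_nnreal_ennreal).pow_const 2
  have hbound : ∀ {m : ℕ} (hm : m < n) (w : ℝ × ℝ → ℝ)
      (hw : ∀ᵐ z ∂μz, w z ∈ Ioc ((m:ℝ)/n) (((m:ℝ)+1)/n))
      (hwm : Measurable fun q : (ℝ × ℝ) × Ω => ((‖y (w q.1) q.2 - y ((m:ℝ)/n) q.2‖₊ : ℝ≥0∞)) ^ 2),
      ∫⁻ q, ((‖y (w q.1) q.2 - y ((m:ℝ)/n) q.2‖₊ : ℝ≥0∞)) ^ 2 ∂(μz.prod P) ≤ μz univ := by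
    intro m hm w hw hwm
    rw [lintegral_prod _ hwm.aemeasurable]
    calc ∫⁻ z, ∫⁻ ω, ((‖y (w z) ω - y ((m:ℝ)/n) ω‖₊ : ℝ≥0∞)) ^ 2 ∂P ∂μz
        ≤ ∫⁻ _, 1 ∂μz := by
          apply lintegral_mono_ae
          filter_upwards [hw] with z hz
          have hw01 : w z ∈ Icc (0:ℝ) 1 := hIcc hm ⟨le_of_lt hz.1, hz.2⟩
          have hm01 : (m:ℝ)/n ∈ Icc (0:ℝ) 1 := hIcc hm ⟨le_rfl, by
            rw [div_le_div_iff_of_pos_right hN]; linarith⟩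
          rw [hyeq hw01, hyeq hm01]
          exact hmom hm hz
      _ = μz univ := by rw [lintegral_one]
  have hFint : Integrable F (μz.prod P) := by
    refine ⟨hFm.aestronglyMeasurable, ?_⟩
    show (∫⁻ q, (‖F q‖₊ : ℝ≥0∞) ∂(μz.prod P)) < ⊤
    have hmul : ∀ a b : ℝ≥0∞, a * b ≤ a ^ 2 + b ^ 2 := by
      intro a b
      rcases le_total a b with h | h
      · calc a * b ≤ b * b := mul_le_mul' h le_rfl
          _ = b ^ 2 := (sq b).symm
          _ ≤ a ^ 2 + b ^ 2 := le_add_self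
      · calc a * b ≤ a * a := mul_le_mul' le_rfl h
          _ = a ^ 2 := (sq a).symm
          _ ≤ a ^ 2 + b ^ 2 := le_self_add
    calc ∫⁻ q, (‖F q‖₊ : ℝ≥0∞) ∂(μz.prod P)
        ≤ ∫⁻ q, (((‖y q.1.1 q.2 - y tk q.2‖₊ : ℝ≥0∞)) ^ 2
            + ((‖y q.1.2 q.2 - y tl q.2‖₊ : ℝ≥0∞)) ^ 2) ∂(μz.prod P) := by
          apply lintegral_mono
          intro q
          rw [hFdef]
          simp only
          rw [nnnorm_mul, ENNReal.coe_mul]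
          exact hmul _ _
      _ = ∫⁻ q, ((‖y q.1.1 q.2 - y tk q.2‖₊ : ℝ≥0∞)) ^ 2 ∂(μz.prod P)
          + ∫⁻ q, ((‖y q.1.2 q.2 - y tl q.2‖₊ : ℝ≥0∞)) ^ 2 ∂(μz.prod P) :=
          lintegral_add_left hg1m _
      _ ≤ μz univ + μz univ := by
          gcongr
          · exact hbound hk (fun z => z.1) (haez.mono fun z hz => hz.1) hg1m
          · exact hbound hl (fun z => z.2) (haez.mono fun z hz => hz.2) hg2m
      _ < ⊤ := by
          rw [hμzuniv]
          exact ENNReal.add_lt_top.2 ⟨ENNReal.mul_lt_top ENNReal.ofReal_lt_top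
            ENNReal.ofReal_lt_top, ENNReal.mul_lt_top ENNReal.ofReal_lt_top
            ENNReal.ofReal_lt_top⟩
  have hprod : ∀ ω, (∫ u in tk..tk1, (x u ω - x tk ω)) * (∫ v in tl..tl1, (x v ω - x tl ω))
      = ∫ z, F (z, ω) ∂μz := by
    intro ω
    have e1 : (∫ u in tk..tk1, (x u ω - x tk ω)) = ∫ u, (y u ω - y tk ω) ∂μI := by
      rw [intervalIntegral.integral_of_le htkk, hμIdef, hIdef]
      apply setIntegral_congr_fun measurableSet_Ioc
      intro u hu
      have hu01 : u ∈ Icc (0:ℝ) 1 := hIcc hk ⟨hu.1.le, hu.2⟩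
      show x u ω - x tk ω = y u ω - y tk ω
      rw [hyeq hu01, hyeq htk01]
    have e2 : (∫ v in tl..tl1, (x v ω - x tl ω)) = ∫ v, (y v ω - y tl ω) ∂μJ := by
      rw [intervalIntegral.integral_of_le htll, hμJdef, hJdef]
      apply setIntegral_congr_fun measurableSet_Ioc
      intro v hv
      have hv01 : v ∈ Icc (0:ℝ) 1 := hIcc hl ⟨hv.1.le, hv.2⟩
      show x v ω - x tl ω = y v ω - y tl ω
      rw [hyeq hv01, hyeq htl01]
    rw [e1, e2, hμzdef, ← integral_prod_mul]
  have hfe : (fun ω => (∫ u in tk..tk1, (x u ω - x tk ω)) *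
      (∫ v in tl..tl1, (x v ω - x tl ω))) = fun ω => ∫ z, F (z, ω) ∂μz := funext hprod
  have hint2 : Integrable (fun ω => ∫ z, F (z, ω) ∂μz) P := hFint.integral_prod_right
  have hswap : ∫ z, (∫ ω, F (z, ω) ∂P) ∂μz = ∫ ω, (∫ z, F (z, ω) ∂μz) ∂P :=
    integral_integral_swap (f := fun z ω => F (z, ω)) hFint
  constructor
  · rw [hfe]; exact hint2
  · rw [hfe, ← hswap]
    have hbd : ∀ᵐ z ∂μz, ‖∫ ω, F (z, ω) ∂P‖ ≤ B := by
      filter_upwards [haez] with z hz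
      have hz1 : z.1 ∈ Icc (0:ℝ) 1 := hIcc hk ⟨hz.1.1.le, hz.1.2⟩
      have hz2 : z.2 ∈ Icc (0:ℝ) 1 := hIcc hl ⟨hz.2.1.le, hz.2.2⟩
      have he : (fun ω => F (z, ω))
          = fun ω => (x z.1 ω - x tk ω) * (x z.2 ω - x tl ω) := by
        funext ω
        rw [hFdef]
        simp only
        rw [hyeq hz1, hyeq hz2, hyeq htk01, hyeq htl01]
      rw [he, Real.norm_eq_abs]
      exact hB z.1 z.2 hz.1 hz.2
    calc ‖∫ z, (∫ ω, F (z, ω) ∂P) ∂μz‖ ≤ B * (μz univ).toReal :=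
        norm_integral_le_of_norm_le_const hbd
      _ = B * ((1/(n:ℝ)) * (1/(n:ℝ))) := by
        rw [hμzuniv, ENNReal.toReal_mul, ENNReal.toReal_ofReal (by positivity)]

end Fubini


section CovBounds

open Set PV

variable {Ω : Type*} [MeasurableSpace Ω] {P : Measure Ω} [IsProbabilityMeasure P]
  {H : ℝ} {x : ℝ → Ω → ℝ}

lemma t_mem01 {n m : ℕ} (hm : m ≤ n) (hn : 0 < n) : (m:ℝ)/n ∈ Icc (0:ℝ) 1 := by
  have hN : (0:ℝ) < n := by exact_mod_cast hn
  constructor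
  · positivity
  · rw [div_le_one hN]; exact_mod_cast hm

lemma cov_near (hx : IsFBM P H x) (hH0 : 0 < H) {n k l : ℕ} (hk : k < n) (hl : l < n)
    {u v : ℝ} (hu : u ∈ Ioc ((k:ℝ)/n) (((k:ℝ)+1)/n)) (hv : v ∈ Ioc ((l:ℝ)/n) (((l:ℝ)+1)/n)) :
    |∫ ω, (x u ω - x ((k:ℝ)/n) ω) * (x v ω - x ((l:ℝ)/n) ω) ∂P| ≤ ((1:ℝ)/n) ^ (2*H) := by
  have hn : 0 < n := by omega
  have hN : (0:ℝ) < n := by exact_mod_cast hn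
  have hk1 : ((k:ℝ)+1)/n ≤ 1 := by
    rw [div_le_one hN]; exact_mod_cast hk
  have hl1 : ((l:ℝ)+1)/n ≤ 1 := by
    rw [div_le_one hN]; exact_mod_cast hl
  have htk : (k:ℝ)/n ∈ Icc (0:ℝ) 1 := t_mem01 hk.le hn
  have htl : (l:ℝ)/n ∈ Icc (0:ℝ) 1 := t_mem01 hl.le hn
  have hu01 : u ∈ Icc (0:ℝ) 1 := ⟨le_trans htk.1 hu.1.le, le_trans hu.2 hk1⟩
  have hv01 : v ∈ Icc (0:ℝ) 1 := ⟨le_trans htl.1 hv.1.le, le_trans hv.2 hl1⟩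
  have hfint : Integrable (fun ω => (x u ω - x ((k:ℝ)/n) ω) ^ 2) P :=
    ((memL2 hx hH0 hu01).sub (memL2 hx hH0 htk)).integrable_sq
  have hgint : Integrable (fun ω => (x v ω - x ((l:ℝ)/n) ω) ^ 2) P :=
    ((memL2 hx hH0 hv01).sub (memL2 hx hH0 htl)).integrable_sq
  have hfg := (inc_cov hx hH0 htk htl hu01 hv01).1
  have hfgabs : Integrable (fun ω => |x u ω - x ((k:ℝ)/n) ω| * |x v ω - x ((l:ℝ)/n) ω|) P := by
    have := hfg.abs
    refine this.congr (Eventually.of_forall fun ω => ?_)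
    simp [abs_mul]
  have h1 : |∫ ω, (x u ω - x ((k:ℝ)/n) ω) * (x v ω - x ((l:ℝ)/n) ω) ∂P|
      ≤ ∫ ω, |x u ω - x ((k:ℝ)/n) ω| * |x v ω - x ((l:ℝ)/n) ω| ∂P := by
    have := norm_integral_le_integral_norm
      (f := fun ω => (x u ω - x ((k:ℝ)/n) ω) * (x v ω - x ((l:ℝ)/n) ω)) (μ := P)
    simpa [Real.norm_eq_abs, abs_mul] using this
  have hbd : Integrable (fun ω => ((x u ω - x ((k:ℝ)/n) ω) ^ 2 + (x v ω - x ((l:ℝ)/n) ω) ^ 2) / 2) P :=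
    (hfint.add hgint).div_const 2
  have h2 : ∫ ω, |x u ω - x ((k:ℝ)/n) ω| * |x v ω - x ((l:ℝ)/n) ω| ∂P
      ≤ ∫ ω, ((x u ω - x ((k:ℝ)/n) ω) ^ 2 + (x v ω - x ((l:ℝ)/n) ω) ^ 2) / 2 ∂P := by
    apply integral_mono hfgabs hbd
    intro ω
    simp only
    nlinarith [sq_nonneg (|x u ω - x ((k:ℝ)/n) ω| - |x v ω - x ((l:ℝ)/n) ω|),
      sq_abs (x u ω - x ((k:ℝ)/n) ω), sq_abs (x v ω - x ((l:ℝ)/n) ω),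
      abs_nonneg (x u ω - x ((k:ℝ)/n) ω), abs_nonneg (x v ω - x ((l:ℝ)/n) ω)]
  have h3 : ∫ ω, ((x u ω - x ((k:ℝ)/n) ω) ^ 2 + (x v ω - x ((l:ℝ)/n) ω) ^ 2) / 2 ∂P
      = ((u - (k:ℝ)/n) ^ (2*H) + (v - (l:ℝ)/n) ^ (2*H)) / 2 := by
    rw [integral_div, integral_add hfint hgint,
      inc_var hx hH0 htk.1 hu.1.le hu01.2, inc_var hx hH0 htl.1 hv.1.le hv01.2]
  have h4 : (u - (k:ℝ)/n) ^ (2*H) ≤ ((1:ℝ)/n) ^ (2*H) := by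
    apply Real.rpow_le_rpow (by linarith [hu.1.le]) _ (by linarith)
    have : ((k:ℝ)+1)/n - (k:ℝ)/n = 1/(n:ℝ) := by rw [div_sub_div_same]; norm_num
    linarith [hu.2]
  have h5 : (v - (l:ℝ)/n) ^ (2*H) ≤ ((1:ℝ)/n) ^ (2*H) := by
    apply Real.rpow_le_rpow (by linarith [hv.1.le]) _ (by linarith)
    have : ((l:ℝ)+1)/n - (l:ℝ)/n = 1/(n:ℝ) := by rw [div_sub_div_same]; norm_num
    linarith [hv.2]
  linarith

lemma cov_far (hx : IsFBM P H x) (hH0 : 0 < H) (hH : H < 1/2) {n k l : ℕ}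
    (hl : l < n) (hkl : k + 2 ≤ l) {u v : ℝ}
    (hu : u ∈ Ioc ((k:ℝ)/n) (((k:ℝ)+1)/n)) (hv : v ∈ Ioc ((l:ℝ)/n) (((l:ℝ)+1)/n)) :
    |∫ ω, (x u ω - x ((k:ℝ)/n) ω) * (x v ω - x ((l:ℝ)/n) ω) ∂P|
      ≤ H * (1 - 2*H) * ((1:ℝ)/n) ^ 2 * (((l - k - 1 : ℕ):ℝ)/n) ^ (2*H - 2) := by
  have hk : k < n := by omega
  have hn : 0 < n := by omega
  have hN : (0:ℝ) < n := by exact_mod_cast hn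
  have hk1 : ((k:ℝ)+1)/n ≤ 1 := by rw [div_le_one hN]; exact_mod_cast hk
  have hl1 : ((l:ℝ)+1)/n ≤ 1 := by rw [div_le_one hN]; exact_mod_cast hl
  have htk : (k:ℝ)/n ∈ Icc (0:ℝ) 1 := t_mem01 hk.le hn
  have htl : (l:ℝ)/n ∈ Icc (0:ℝ) 1 := t_mem01 hl.le hn
  have hu01 : u ∈ Icc (0:ℝ) 1 := ⟨le_trans htk.1 hu.1.le, le_trans hu.2 hk1⟩
  have hv01 : v ∈ Icc (0:ℝ) 1 := ⟨le_trans htl.1 hv.1.le, le_trans hv.2 hl1⟩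
  set δ : ℝ := u - (k:ℝ)/n with hδdef
  set b₁ : ℝ := (l:ℝ)/n - u with hb₁def
  set b₂ : ℝ := v - u with hb₂def
  have hMcast : ((l - k - 1 : ℕ):ℝ) = (l:ℝ) - k - 1 := by
    have : (l:ℕ) - k - 1 = l - (k + 1) := by omega
    rw [this, Nat.cast_sub (by omega)]
    push_cast; ring
  have hMpos : (0:ℝ) < ((l - k - 1 : ℕ):ℝ)/n := by
    rw [hMcast]
    have : (k:ℝ) + 2 ≤ l := by exact_mod_cast hkl
    apply div_pos (by linarith) hN
  have hgap : ((l - k - 1 : ℕ):ℝ)/n ≤ b₁ := by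
    rw [hb₁def, hMcast]
    have h1 : ((l:ℝ) - k - 1)/n = (l:ℝ)/n - ((k:ℝ)+1)/n := by ring
    rw [h1]
    linarith [hu.2]
  have hδ0 : 0 ≤ δ := by rw [hδdef]; linarith [hu.1.le]
  have hδη : δ ≤ 1/(n:ℝ) := by
    rw [hδdef]
    have : ((k:ℝ)+1)/n - (k:ℝ)/n = 1/(n:ℝ) := by rw [div_sub_div_same]; norm_num
    linarith [hu.2]
  have hb₁0 : 0 < b₁ := lt_of_lt_of_le hMpos hgap
  have hb₁₂ : b₁ ≤ b₂ := by rw [hb₁def, hb₂def]; linarith [hv.1.le]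
  have hb2η : b₂ - b₁ ≤ 1/(n:ℝ) := by
    rw [hb₁def, hb₂def]
    have : ((l:ℝ)+1)/n - (l:ℝ)/n = 1/(n:ℝ) := by rw [div_sub_div_same]; norm_num
    linarith [hv.2]
  rw [(inc_cov hx hH0 htk htl hu01 hv01).2]
  have habs1 : |v - u| = b₂ := abs_of_nonneg (by rw [hb₂def] at *; linarith [hb₁0, hb₁₂])
  have habs2 : |(l:ℝ)/n - u| = b₁ := abs_of_pos hb₁0
  have habs3 : |v - (k:ℝ)/n| = b₂ + δ := by
    rw [show v - (k:ℝ)/n = b₂ + δ by rw [hb₂def, hδdef]; ring]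
    exact abs_of_nonneg (by linarith [hb₁0, hb₁₂, hδ0])
  have habs4 : |(l:ℝ)/n - (k:ℝ)/n| = b₁ + δ := by
    rw [show (l:ℝ)/n - (k:ℝ)/n = b₁ + δ by rw [hb₁def, hδdef]; ring]
    exact abs_of_nonneg (by linarith [hb₁0, hδ0])
  have hcov : fbmCov H u v - fbmCov H u ((l:ℝ)/n) - fbmCov H ((k:ℝ)/n) v
      + fbmCov H ((k:ℝ)/n) ((l:ℝ)/n)
      = (1/2) * (((b₂ + δ) ^ (2*H) - b₂ ^ (2*H)) - ((b₁ + δ) ^ (2*H) - b₁ ^ (2*H))) := by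
    rw [fbmCov, fbmCov, fbmCov, fbmCov, habs1, habs2, habs3, habs4]
    ring
  rw [hcov, abs_mul, abs_of_pos (by norm_num : (0:ℝ) < 1/2)]
  have hkey := second_diff_bound hH0 hH hδ0 hδη hb₁0 hb₁₂ hb2η
  have hmono : b₁ ^ (2*H - 2) ≤ (((l - k - 1 : ℕ):ℝ)/n) ^ (2*H - 2) :=
    Real.rpow_le_rpow_of_nonpos hMpos hgap (by linarith)
  have h1 : (0:ℝ) ≤ 2 * H * (1 - 2*H) * (1/(n:ℝ)) ^ 2 := by
    have : (0:ℝ) < 1 - 2*H := by linarith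
    positivity
  calc (1/2) * |((b₂ + δ) ^ (2*H) - b₂ ^ (2*H)) - ((b₁ + δ) ^ (2*H) - b₁ ^ (2*H))|
      ≤ (1/2) * (2 * H * (1 - 2*H) * (1/(n:ℝ)) ^ 2 * b₁ ^ (2*H - 2)) := by linarith
    _ ≤ (1/2) * (2 * H * (1 - 2*H) * (1/(n:ℝ)) ^ 2 * ((((l - k - 1 : ℕ):ℝ)/n) ^ (2*H - 2))) := by
        have := mul_le_mul_of_nonneg_left hmono h1
        linarith
    _ = H * (1 - 2*H) * ((1:ℝ)/n) ^ 2 * (((l - k - 1 : ℕ):ℝ)/n) ^ (2*H - 2) := by ring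

end CovBounds


section PairBound

open Set PV

variable {Ω : Type*} [MeasurableSpace Ω] {P : Measure Ω} [IsProbabilityMeasure P]
  {H : ℝ} {x : ℝ → Ω → ℝ}

/-- Summable weight controlling `|E[a_k a_l]| ≤ n^(-2H-2) wt H (l-k)`. -/
def wt (H : ℝ) (m : ℕ) : ℝ :=
  if m ≤ 1 then 1 else H * (1 - 2*H) * ((m - 1 : ℕ):ℝ) ^ (2*H - 2)

lemma wt_nonneg (hH0 : 0 < H) (hH : H < 1/2) (m : ℕ) : 0 ≤ wt H m := by
  rw [wt]; split
  · norm_num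
  · have h1 : (0:ℝ) < 1 - 2*H := by linarith
    have h2 : (0:ℝ) ≤ ((m - 1 : ℕ):ℝ) ^ (2*H - 2) := Real.rpow_nonneg (Nat.cast_nonneg _) _
    positivity

lemma wt_summable (hH0 : 0 < H) (hH : H < 1/2) : Summable (wt H) := by
  have h1 : Summable (fun m : ℕ => ((m:ℝ)) ^ (2*H - 2)) :=
    Real.summable_nat_rpow.2 (by linarith)
  have h2 : Summable (fun m : ℕ => H * (1 - 2*H) * (((m + 1 : ℕ)):ℝ) ^ (2*H - 2)) :=
    ((summable_nat_add_iff 1).2 h1).mul_left _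
  apply (summable_nat_add_iff 2).1
  refine h2.congr fun m => ?_
  rw [wt, if_neg (by omega), show m + 2 - 1 = m + 1 from rfl]

lemma pow_conv1 {N : ℝ} (hN : 0 < N) (H : ℝ) :
    ((1:ℝ)/N) ^ (2*H) * (1/N * (1/N)) = N ^ (-(2*H) - 2) := by
  have h1N : (1:ℝ)/N = N ^ (-1:ℝ) := by rw [Real.rpow_neg_one, one_div]
  have hrp : ((1:ℝ)/N) ^ (2*H) = N ^ (-(2*H)) := by
    rw [Real.div_rpow zero_le_one hN.le, Real.one_rpow, Real.rpow_neg hN.le, one_div]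
  rw [hrp, h1N, ← Real.rpow_add hN, ← Real.rpow_add hN]
  congr 1
  ring

lemma pow_conv2 {N : ℝ} (hN : 0 < N) (H : ℝ) {M : ℝ} (hM : 0 ≤ M) :
    H * (1 - 2*H) * ((1:ℝ)/N) ^ 2 * ((M/N) ^ (2*H - 2)) * (1/N * (1/N))
      = N ^ (-(2*H) - 2) * (H * (1 - 2*H) * M ^ (2*H - 2)) := by
  have hdiv : (M/N) ^ (2*H-2) = M ^ (2*H-2) * N ^ (-(2*H-2)) := by
    rw [Real.div_rpow hM hN.le, div_eq_mul_inv, Real.rpow_neg hN.le]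
  have hpow2 : ((1:ℝ)/N) ^ 2 = N ^ (-2:ℝ) := by
    rw [one_div, ← Real.rpow_natCast N⁻¹ 2, ← Real.rpow_neg_one N, ← Real.rpow_mul hN.le]
    norm_num
  have h1N : (1:ℝ)/N = N ^ (-1:ℝ) := by rw [Real.rpow_neg_one, one_div]
  have hN4 : N ^ (-2:ℝ) * N ^ (-(2*H-2)) * (N ^ (-1:ℝ) * N ^ (-1:ℝ)) = N ^ (-(2*H)-2) := by
    rw [← Real.rpow_add hN, ← Real.rpow_add hN, ← Real.rpow_add hN]
    congr 1
    ring
  rw [hdiv, hpow2, h1N, ← hN4]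
  ring

lemma pair_bound (hx : IsFBM P H x) (hH0 : 0 < H) (hH : H < 1/2) {n k l : ℕ}
    (hk : k < n) (hl : l < n) :
    Integrable (fun ω => (∫ u in ((k:ℝ)/n)..(((k:ℝ)+1)/n), (x u ω - x ((k:ℝ)/n) ω)) *
        (∫ v in ((l:ℝ)/n)..(((l:ℝ)+1)/n), (x v ω - x ((l:ℝ)/n) ω))) P ∧
    |∫ ω, (∫ u in ((k:ℝ)/n)..(((k:ℝ)+1)/n), (x u ω - x ((k:ℝ)/n) ω)) *
        (∫ v in ((l:ℝ)/n)..(((l:ℝ)+1)/n), (x v ω - x ((l:ℝ)/n) ω)) ∂P|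
      ≤ (n:ℝ) ^ (-(2*H) - 2) * wt H (l - k) := by
  have hN : (0:ℝ) < n := by
    have : 0 < n := by omega
    exact_mod_cast this
  rcases le_or_gt l (k+1) with hle | hlt
  · have hB := cov_integral hx hH0 hk hl (B := ((1:ℝ)/(n:ℝ)) ^ (2*H))
      (Real.rpow_nonneg (by positivity) _) (fun u v hu hv => cov_near hx hH0 hk hl hu hv)
    refine ⟨hB.1, ?_⟩
    calc |∫ ω, (∫ u in ((k:ℝ)/n)..(((k:ℝ)+1)/n), (x u ω - x ((k:ℝ)/n) ω)) *
        (∫ v in ((l:ℝ)/n)..(((l:ℝ)+1)/n), (x v ω - x ((l:ℝ)/n) ω)) ∂P|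
        ≤ ((1:ℝ)/(n:ℝ)) ^ (2*H) * (1/(n:ℝ) * (1/(n:ℝ))) := hB.2
      _ = (n:ℝ) ^ (-(2*H)-2) := pow_conv1 hN H
      _ = (n:ℝ) ^ (-(2*H)-2) * wt H (l-k) := by rw [wt, if_pos (by omega)]; ring
  · have hkl : k + 2 ≤ l := by omega
    set B := H * (1 - 2*H) * ((1:ℝ)/(n:ℝ)) ^ 2 * (((l - k - 1 : ℕ):ℝ)/(n:ℝ)) ^ (2*H - 2)
      with hBdef
    have hB0 : 0 ≤ B := by
      have h1 : (0:ℝ) < 1 - 2*H := by linarith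
      have h2 : (0:ℝ) ≤ (((l - k - 1 : ℕ):ℝ)/(n:ℝ)) ^ (2*H - 2) :=
        Real.rpow_nonneg (by positivity) _
      rw [hBdef]; positivity
    have hB := cov_integral hx hH0 hk hl hB0
      (fun u v hu hv => cov_far hx hH0 hH hl hkl hu hv)
    refine ⟨hB.1, ?_⟩
    calc |∫ ω, (∫ u in ((k:ℝ)/n)..(((k:ℝ)+1)/n), (x u ω - x ((k:ℝ)/n) ω)) *
        (∫ v in ((l:ℝ)/n)..(((l:ℝ)+1)/n), (x v ω - x ((l:ℝ)/n) ω)) ∂P|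
        ≤ B * (1/(n:ℝ) * (1/(n:ℝ))) := hB.2
      _ = (n:ℝ) ^ (-(2*H)-2) * (H * (1-2*H) * ((l-k-1:ℕ):ℝ) ^ (2*H-2)) := by
          rw [hBdef]; exact pow_conv2 hN H (Nat.cast_nonneg _)
      _ = (n:ℝ) ^ (-(2*H)-2) * wt H (l-k) := by
          rw [wt, if_neg (by omega)]

end PairBound

end PVAux

open PV in
/-- Second-moment bound `E[|h^n_{st}|²] ≤ K n^{-2H-1} (t-s)` for
`h^n_{st} = Σ_{s ≤ t_k < t} ∫_{t_k}^{t_{k+1}} (x_u - x_{t_k}) du` along the uniform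
partition, where `s = j/n` and `t = j'/n` are partition points. -/
theorem stmt5 {Ω : Type*} [MeasurableSpace Ω] (P : Measure Ω) [IsProbabilityMeasure P]
    (H : ℝ) (hH0 : 0 < H) (hH : H < 1 / 2)
    (x : ℝ → Ω → ℝ) (hx : IsFBM P H x) :
    ∃ K : ℝ, 0 < K ∧ ∀ n : ℕ, 1 ≤ n → ∀ j j' : ℕ, j ≤ j' → j' ≤ n →
      Integrable (fun ω => (hnInt x n ((j : ℝ) / n) ((j' : ℝ) / n) ω) ^ 2) P ∧
      ∫ ω, (hnInt x n ((j : ℝ) / n) ((j' : ℝ) / n) ω) ^ 2 ∂P ≤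
        K * (n : ℝ) ^ (-(2 * H) - 1) * ((j' : ℝ) / n - (j : ℝ) / n) := by
    classical
  have hH2 : (0:ℝ) < 1 - 2*H := by linarith
  set W : ℝ := ∑' m, PVAux.wt H m with hWdef
  have hws := PVAux.wt_summable hH0 hH
  have hw0 := PVAux.wt_nonneg hH0 hH
  have hW0 : 0 ≤ W := tsum_nonneg hw0
  have hWs : ∀ s : Finset ℕ, ∑ m ∈ s, PVAux.wt H m ≤ W := fun s =>
    Summable.sum_le_tsum s (fun m _ => hw0 m) hws
  refine ⟨2 * W + 1, by linarith, ?_⟩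
  intro n hn j j' hjj' hj'n
  have hN : (0:ℝ) < n := by exact_mod_cast hn
  have hNe0 : (0:ℝ) ≤ (n:ℝ) ^ (-(2*H) - 2) := Real.rpow_nonneg hN.le _
  set A : ℕ → Ω → ℝ := fun k ω =>
    ∫ u in ((k:ℝ)/n)..(((k:ℝ)+1)/n), (x u ω - x ((k:ℝ)/n) ω) with hAdef
  have hpair : ∀ k l : ℕ, k < n → l < n →
      Integrable (fun ω => A k ω * A l ω) P ∧
      |∫ ω, A k ω * A l ω ∂P| ≤ (n:ℝ) ^ (-(2*H) - 2) * PVAux.wt H (l - k) :=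
    fun k l hk hl => PVAux.pair_bound hx hH0 hH hk hl
  have hIco_sub : ∀ k ∈ Finset.Ico j j', k < n := fun k hk => by
    rw [Finset.mem_Ico] at hk; omega
  have hcond : ∀ k : ℕ, ((j:ℝ)/n ≤ (k:ℝ)/n ∧ (k:ℝ)/n < (j':ℝ)/n) ↔ (j ≤ k ∧ k < j') := by
    intro k
    rw [div_le_div_iff_of_pos_right hN, div_lt_div_iff_of_pos_right hN, Nat.cast_le, Nat.cast_lt]
  have hh : ∀ ω, hnInt x n ((j:ℝ)/n) ((j':ℝ)/n) ω = ∑ k ∈ Finset.Ico j j', A k ω := by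
    intro ω
    simp only [hnInt]
    calc ∑ k ∈ Finset.range n, (if (j:ℝ)/n ≤ (k:ℝ)/n ∧ (k:ℝ)/n < (j':ℝ)/n then
          ∫ u in ((k:ℝ)/n)..(((k:ℝ)+1)/n), (x u ω - x ((k:ℝ)/n) ω) else 0)
        = ∑ k ∈ Finset.range n, (if j ≤ k ∧ k < j' then A k ω else 0) := by
          refine Finset.sum_congr rfl fun k _ => ?_
          exact if_congr (hcond k) rfl rfl
      _ = ∑ k ∈ (Finset.range n).filter (fun k => j ≤ k ∧ k < j'), A k ω :=
          (Finset.sum_filter _ _).symm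
      _ = ∑ k ∈ Finset.Ico j j', A k ω := by
          apply Finset.sum_congr _ (fun _ _ => rfl)
          ext k
          simp only [Finset.mem_filter, Finset.mem_range, Finset.mem_Ico]
          omega
  have hsq : (fun ω => (hnInt x n ((j:ℝ)/n) ((j':ℝ)/n) ω) ^ 2)
      = fun ω => ∑ k ∈ Finset.Ico j j', ∑ l ∈ Finset.Ico j j', A k ω * A l ω := by
    funext ω
    rw [hh ω, sq, Finset.sum_mul_sum]
  have hint_inner : ∀ k ∈ Finset.Ico j j',
      Integrable (fun ω => ∑ l ∈ Finset.Ico j j', A k ω * A l ω) P := fun k hk =>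
    integrable_finset_sum _ (fun l hl => (hpair k l (hIco_sub k hk) (hIco_sub l hl)).1)
  constructor
  · rw [hsq]
    exact integrable_finset_sum _ hint_inner
  · rw [hsq]
    rw [integral_finset_sum _ hint_inner]
    have hswap : ∀ k ∈ Finset.Ico j j', ∫ ω, ∑ l ∈ Finset.Ico j j', A k ω * A l ω ∂P
        = ∑ l ∈ Finset.Ico j j', ∫ ω, A k ω * A l ω ∂P := fun k hk =>
      integral_finset_sum _ (fun l hl => (hpair k l (hIco_sub k hk) (hIco_sub l hl)).1)
    rw [Finset.sum_congr rfl hswap]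
    have hinner : ∀ k ∈ Finset.Ico j j',
        ∑ l ∈ Finset.Ico j j', ∫ ω, A k ω * A l ω ∂P ≤ (n:ℝ) ^ (-(2*H) - 2) * (2 * W) := by
      intro k hk
      have hkn := hIco_sub k hk
      set s₁ := (Finset.Ico j j').filter (fun l => l ≤ k) with hs₁
      set s₂ := (Finset.Ico j j').filter (fun l => ¬ l ≤ k) with hs₂
      have h1 : ∀ l ∈ s₁, |∫ ω, A k ω * A l ω ∂P|
          ≤ (n:ℝ) ^ (-(2*H) - 2) * PVAux.wt H (k - l) := by
        intro l hl
        rw [hs₁, Finset.mem_filter] at hl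
        have hcomm : (fun ω => A k ω * A l ω) = fun ω => A l ω * A k ω := by
          funext ω; ring
        rw [hcomm]
        exact (hpair l k (hIco_sub l hl.1) hkn).2
      have h2 : ∀ l ∈ s₂, |∫ ω, A k ω * A l ω ∂P|
          ≤ (n:ℝ) ^ (-(2*H) - 2) * PVAux.wt H (l - k) := by
        intro l hl
        rw [hs₂, Finset.mem_filter] at hl
        exact (hpair k l hkn (hIco_sub l hl.1)).2
      have hW1 : ∑ l ∈ s₁, PVAux.wt H (k - l) ≤ W := by
        have hinj : ∀ a ∈ s₁, ∀ b ∈ s₁, k - a = k - b → a = b := by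
          intro a ha b hb hab
          rw [hs₁, Finset.mem_filter] at ha hb
          omega
        rw [← Finset.sum_image hinj]
        exact hWs _
      have hW2 : ∑ l ∈ s₂, PVAux.wt H (l - k) ≤ W := by
        have hinj : ∀ a ∈ s₂, ∀ b ∈ s₂, a - k = b - k → a = b := by
          intro a ha b hb hab
          rw [hs₂, Finset.mem_filter] at ha hb
          omega
        rw [← Finset.sum_image hinj]
        exact hWs _
      calc ∑ l ∈ Finset.Ico j j', ∫ ω, A k ω * A l ω ∂P
          ≤ ∑ l ∈ Finset.Ico j j', |∫ ω, A k ω * A l ω ∂P| :=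
            Finset.sum_le_sum fun l _ => le_abs_self _
        _ = (∑ l ∈ s₁, |∫ ω, A k ω * A l ω ∂P|) + ∑ l ∈ s₂, |∫ ω, A k ω * A l ω ∂P| :=
            (Finset.sum_filter_add_sum_filter_not _ _ _).symm
        _ ≤ (∑ l ∈ s₁, (n:ℝ) ^ (-(2*H) - 2) * PVAux.wt H (k - l))
            + ∑ l ∈ s₂, (n:ℝ) ^ (-(2*H) - 2) * PVAux.wt H (l - k) :=
            add_le_add (Finset.sum_le_sum h1) (Finset.sum_le_sum h2)
        _ = (n:ℝ) ^ (-(2*H) - 2) * (∑ l ∈ s₁, PVAux.wt H (k - l))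
            + (n:ℝ) ^ (-(2*H) - 2) * (∑ l ∈ s₂, PVAux.wt H (l - k)) := by
            rw [Finset.mul_sum, Finset.mul_sum]
        _ ≤ (n:ℝ) ^ (-(2*H) - 2) * W + (n:ℝ) ^ (-(2*H) - 2) * W :=
            add_le_add (mul_le_mul_of_nonneg_left hW1 hNe0)
              (mul_le_mul_of_nonneg_left hW2 hNe0)
        _ = (n:ℝ) ^ (-(2*H) - 2) * (2 * W) := by ring
    have hcast : ((j' - j : ℕ):ℝ) = (j':ℝ) - j := by
      rw [Nat.cast_sub hjj']
    have hjj'R : (0:ℝ) ≤ (j':ℝ) - j := by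
      rw [← hcast]; positivity
    have hconv : (n:ℝ) ^ (-(2*H) - 1) * ((j':ℝ)/n - (j:ℝ)/n)
        = ((j':ℝ) - j) * (n:ℝ) ^ (-(2*H) - 2) := by
      have hmul : (n:ℝ) ^ (-(2*H) - 1) * ((n:ℝ))⁻¹ = (n:ℝ) ^ (-(2*H) - 2) := by
        rw [← Real.rpow_neg_one (n:ℝ), ← Real.rpow_add hN]
        congr 1
        ring
      rw [div_sub_div_same, div_eq_mul_inv, ← hmul]
      ring
    calc ∑ k ∈ Finset.Ico j j', ∑ l ∈ Finset.Ico j j', ∫ ω, A k ω * A l ω ∂P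
        ≤ ∑ _k ∈ Finset.Ico j j', (n:ℝ) ^ (-(2*H) - 2) * (2 * W) :=
          Finset.sum_le_sum hinner
      _ = ((j' - j : ℕ):ℝ) * ((n:ℝ) ^ (-(2*H) - 2) * (2 * W)) := by
          rw [Finset.sum_const, Nat.card_Ico, nsmul_eq_mul]
      _ ≤ ((j' - j : ℕ):ℝ) * ((n:ℝ) ^ (-(2*H) - 2) * (2 * W + 1)) := by
          apply mul_le_mul_of_nonneg_left _ (by positivity)
          apply mul_le_mul_of_nonneg_left (by linarith) hNe0
      _ = (2 * W + 1) * ((n:ℝ) ^ (-(2*H) - 1) * ((j':ℝ)/n - (j:ℝ)/n)) := by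
          rw [hconv, hcast]; ring
      _ = (2 * W + 1) * (n:ℝ) ^ (-(2*H) - 1) * ((j':ℝ)/n - (j:ℝ)/n) := by ring
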